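/- Let G be a countable group with a left-invariant linear order ≤ and let N be a normal subgroup of G such that for all g, h ∈ G with gN ≠ hN, whether g < h depends only on the cosets gN and hN (so ≤ induces a linear order on G/N). Let i₀ : G/N → ℝ be any strictly order-preserving map for the induced order. Then there exist a strictly order-preserving map i : G → ℝ and a continuous monotone nondecreasing map c : ℝ → ℝ such that c(i(g)) = i₀(gN) for all g ∈ G. (That is, i₀ can be obtained from the embedding i by collapsing intervals; i is a 'blow-up' of i₀.) -/

import Mathlib

open Set MeasureTheory

/-- toReal of ofReal is `max x 0`. -/
private lemma toReal_ofReal_max (x : ℝ) : (ENNReal.ofReal x).toReal = max x 0 := by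
  rcases le_total x 0 with h | h
  · rw [ENNReal.ofReal_eq_zero.2 h]
    simp [max_eq_right h]
  · rw [ENNReal.toReal_ofReal h, max_eq_left h]

/-- Real clamp increment bound. -/
private lemma clamp_incr_le (a w y1 y2 : ℝ) (hw : 0 ≤ w) (h12 : y1 ≤ y2) :
    min w (max 0 (y2 - a)) - min w (max 0 (y1 - a)) ≤ max (min y2 (a + w) - max y1 a) 0 := by
  rcases le_total y2 a with h2 | h2
  · have e2 : max 0 (y2 - a) = 0 := max_eq_left (by linarith)
    have e1 : max 0 (y1 - a) = 0 := max_eq_left (by linarith)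
    rw [e1, e2]; simp
  · rcases le_total (a + w) y1 with h3 | h3
    · have e1 : max 0 (y1 - a) = y1 - a := max_eq_right (by linarith)
      have e2 : max 0 (y2 - a) = y2 - a := max_eq_right (by linarith)
      rw [e1, e2, min_eq_left (by linarith), min_eq_left (by linarith)]
      simp
    · refine le_trans ?_ (le_max_left _ _)
      have e2 : max 0 (y2 - a) = y2 - a := max_eq_right (by linarith)
      rw [e2]
      have key2 : min w (y2 - a) ≤ min y2 (a + w) - a := by
        rcases le_total w (y2 - a) with h | h
        · rw [min_eq_left h, min_eq_right (by linarith)]; linarith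
        · rw [min_eq_right h, min_eq_left (by linarith)]
      have key1 : max y1 a - a ≤ min w (max 0 (y1 - a)) := by
        rcases le_total y1 a with h | h
        · rw [max_eq_right h]
          have : (0:ℝ) ≤ min w (max 0 (y1 - a)) := le_min hw (le_max_left _ _)
          linarith
        · rw [max_eq_left h, max_eq_right (by linarith : (0:ℝ) ≤ y1 - a)]
          exact le_min (by linarith) le_rfl
      linarith

theorem blow_up_of_quotient_embedding
    {G : Type*} [Group G] [Countable G] [LinearOrder G]
    [CovariantClass G G (· * ·) (· ≤ ·)]
    (N : Subgroup G) [N.Normal]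
    (hdep : ∀ g g' h h' : G, (g : G ⧸ N) = (g' : G ⧸ N) → (h : G ⧸ N) = (h' : G ⧸ N) →
      (g : G ⧸ N) ≠ (h : G ⧸ N) → (g < h ↔ g' < h'))
    (i₀ : G ⧸ N → ℝ)
    (hi₀ : ∀ g h : G, (g : G ⧸ N) ≠ (h : G ⧸ N) → g < h →
      i₀ (g : G ⧸ N) < i₀ (h : G ⧸ N)) :
    ∃ (i : G → ℝ) (c : ℝ → ℝ),
      StrictMono i ∧ Continuous c ∧ Monotone c ∧
      ∀ g : G, c (i g) = i₀ (g : G ⧸ N) := by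
  classical
  obtain ⟨n, hn⟩ := exists_injective_nat G
  set w : G → ℝ := fun h => (2⁻¹ : ℝ) ^ (n h) with hwdef
  have hwpos : ∀ h, 0 < w h := fun h => by positivity
  have hwsum : Summable w := by
    have : Summable fun k : ℕ => (2⁻¹ : ℝ) ^ k :=
      summable_geometric_of_lt_one (by norm_num) (by norm_num)
    exact this.comp_injective hn
  -- the coset values are weakly monotone
  have hmono : ∀ g g' : G, g < g' → i₀ (g : G ⧸ N) ≤ i₀ (g' : G ⧸ N) := by
    intro g g' hlt
    by_cases hc : (g : G ⧸ N) = (g' : G ⧸ N)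
    · exact le_of_eq (by rw [hc])
    · exact le_of_lt (hi₀ g g' hc hlt)
  -- indicator of elements below g
  set f : G → G → ℝ := fun g h => if h < g then w h else 0 with hfdef
  have hf_nonneg : ∀ g h, 0 ≤ f g h := by
    intro g h; simp only [hfdef]; split_ifs with h'
    · exact (hwpos h).le
    · exact le_rfl
  have hf_le : ∀ g h, f g h ≤ w h := by
    intro g h; simp only [hfdef]; split_ifs with h'
    · exact le_rfl
    · exact (hwpos h).le
  have hfsum : ∀ g, Summable (f g) := fun g =>
    hwsum.of_nonneg_of_le (hf_nonneg g) (hf_le g)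
  -- the embedding
  set p : G → ℝ := fun g => i₀ (g : G ⧸ N) + ∑' h, f g h with hpdef
  -- the key gap estimate
  have hle : ∀ g g' : G, g < g' → p g + w g ≤ p g' := by
    intro g g' hlt
    have hsum : ∑' h, f g h + w g = ∑' h, (f g h + if h = g then w g else 0) := by
      rw [Summable.tsum_add (hfsum g) ((hasSum_ite_eq g (w g)).summable), tsum_ite_eq]
    have hpt : ∀ h, f g h + (if h = g then w g else 0) ≤ f g' h := by
      intro h
      by_cases he : h = g
      · subst he
        simp only [hfdef, lt_irrefl, if_neg (lt_irrefl h), if_pos rfl, if_pos hlt]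
        simp
      · simp only [hfdef, if_neg he, add_zero]
        split_ifs with h1 h2
        · exact le_rfl
        · exact absurd (h1.trans hlt) h2
        · exact (hwpos h).le
        · exact le_rfl
    have : ∑' h, (f g h + if h = g then w g else 0) ≤ ∑' h, f g' h := by
      refine Summable.tsum_le_tsum hpt ?_ (hfsum g')
      exact (hfsum g).add ((hasSum_ite_eq g (w g)).summable)
    have := hsum ▸ this
    have := hmono g g' hlt
    simp only [hpdef]
    linarith
  have hpmono : StrictMono p := by
    intro g g' hlt
    have := hle g g' hlt
    have := hwpos g
    linarith
  -- the collapsing map's correction term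
  set φ : G → ℝ → ℝ := fun h y => min (w h) (max 0 (y - p h)) with hφdef
  have hφ_nonneg : ∀ h y, 0 ≤ φ h y := fun h y =>
    le_min (hwpos h).le (le_max_left 0 _)
  have hφ_le : ∀ h y, φ h y ≤ w h := fun h y => min_le_left _ _
  have hφsum : ∀ y, Summable (fun h => φ h y) := fun y =>
    hwsum.of_nonneg_of_le (fun h => hφ_nonneg h y) (fun h => hφ_le h y)
  set T : ℝ → ℝ := fun y => ∑' h, φ h y with hTdef
  set c : ℝ → ℝ := fun y => y - T y with hcdef
  have hTcont : Continuous T := by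
    refine continuous_tsum (fun h => ?_) hwsum (fun h y => ?_)
    · exact continuous_const.min (continuous_const.max (continuous_id.sub continuous_const))
    · rw [Real.norm_eq_abs, abs_of_nonneg (hφ_nonneg h y)]
      exact hφ_le h y
  -- values at points p g
  have hTval : ∀ g, T (p g) = ∑' h, f g h := by
    intro g
    refine tsum_congr fun h => ?_
    rcases lt_trichotomy h g with hlt | heq | hgt
    · have h1 : p h + w h ≤ p g := hle h g hlt
      have : max 0 (p g - p h) = p g - p h := max_eq_right (by have := hwpos h; linarith)
      simp only [hφdef, hfdef, this, if_pos hlt]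
      exact min_eq_left (by linarith)
    · subst heq
      simp only [hφdef, hfdef, sub_self, if_neg (lt_irrefl h)]
      rw [max_eq_left le_rfl, min_eq_right (hwpos h).le]
    · have h1 : p g + w g ≤ p h := hle g h hgt
      have : max 0 (p g - p h) = 0 := max_eq_left (by have := hwpos g; linarith)
      simp only [hφdef, hfdef, this, if_neg (not_lt.2 hgt.le)]
      exact min_eq_right (hwpos h).le
  have hcval : ∀ g, c (p g) = i₀ (g : G ⧸ N) := by
    intro g
    show p g - T (p g) = _
    rw [hTval g]
    simp only [hpdef]
    ring
  -- monotonicity of c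
  have hcmono : Monotone c := by
    intro y1 y2 h12
    simp only [hcdef]
    rw [sub_le_sub_iff]
    have key : T y2 - T y1 ≤ y2 - y1 := by
      have hsub : T y2 - T y1 = ∑' h, (φ h y2 - φ h y1) :=
        (Summable.tsum_sub (hφsum y2) (hφsum y1)).symm
      set ν : G → ENNReal := fun h => volume (Ioc y1 y2 ∩ Ioc (p h) (p h + w h)) with hνdef
      have hνval : ∀ h, (ν h).toReal = max (min y2 (p h + w h) - max y1 (p h)) 0 := by
        intro h
        rw [hνdef]
        simp only [Set.Ioc_inter_Ioc, Real.volume_Ioc, toReal_ofReal_max]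
      have hν_ne_top : ∀ h, ν h ≠ ⊤ := by
        intro h
        exact ne_top_of_le_ne_top (by simp) (measure_mono (inter_subset_left))
      have hstep : ∀ h, φ h y2 - φ h y1 ≤ (ν h).toReal := by
        intro h
        rw [hνval h]
        exact clamp_incr_le (p h) (w h) y1 y2 (hwpos h).le h12
      have hνsummable : Summable (fun h => (ν h).toReal) := by
        refine hwsum.of_nonneg_of_le (fun h => ENNReal.toReal_nonneg) (fun h => ?_)
        rw [hνval h]
        rcases le_total (min y2 (p h + w h) - max y1 (p h)) 0 with hc0 | hc0
        · rw [max_eq_right hc0]; exact (hwpos h).le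
        · rw [max_eq_left hc0]
          have h1 : min y2 (p h + w h) ≤ p h + w h := min_le_right _ _
          have h2 : p h ≤ max y1 (p h) := le_max_right _ _
          linarith
      have h1 : ∑' h, (φ h y2 - φ h y1) ≤ ∑' h, (ν h).toReal :=
        Summable.tsum_le_tsum hstep ((hφsum y2).sub (hφsum y1)) hνsummable
      have hdisj : Pairwise (Function.onFun Disjoint
          fun h => Ioc y1 y2 ∩ Ioc (p h) (p h + w h)) := by
        intro a b hab
        have : Disjoint (Ioc (p a) (p a + w a)) (Ioc (p b) (p b + w b)) := by
          rw [Set.Ioc_disjoint_Ioc]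
          rcases hab.lt_or_gt with hlt | hlt
          · have := hle a b hlt
            exact le_trans (min_le_left _ _) (le_trans this (le_max_right _ _))
          · have := hle b a hlt
            exact le_trans (min_le_right _ _) (le_trans this (le_max_left _ _))
        exact this.mono inter_subset_right inter_subset_right
      have hmeas : ∀ h : G, MeasurableSet (Ioc y1 y2 ∩ Ioc (p h) (p h + w h)) :=
        fun h => measurableSet_Ioc.inter measurableSet_Ioc
      have h2 : ∑' h, ν h = volume (⋃ h, Ioc y1 y2 ∩ Ioc (p h) (p h + w h)) :=
        (measure_iUnion hdisj hmeas).symm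
      have h3 : volume (⋃ h, Ioc y1 y2 ∩ Ioc (p h) (p h + w h)) ≤ volume (Ioc y1 y2) :=
        measure_mono (iUnion_subset fun h => inter_subset_left)
      have h4 : ∑' h, (ν h).toReal ≤ y2 - y1 := by
        rw [← ENNReal.tsum_toReal_eq hν_ne_top]
        have : (∑' h, ν h).toReal ≤ (volume (Ioc y1 y2)).toReal := by
          refine ENNReal.toReal_mono (by simp) (h2 ▸ h3)
        rwa [Real.volume_Ioc, ENNReal.toReal_ofReal (by linarith)] at this
      rw [hsub]
      exact le_trans h1 h4
    linarith
  exact ⟨p, c, hpmono, continuous_id.sub hTcont, hcmono, hcval⟩
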